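/- For integers d2 ≥ d1 ≥ 2, with P̃_X(k) = d2(d1·d2 - 2d1 - d2 + 1)k² + 2(d2-1)(d1-1)d1·k + d1²(d1-1), one has P̃_X(-(d1-1)/d2) > 0; hence the root k* of P̃_X lying in (-d1/d2, 0) satisfies k* < -(d1-1)/d2. -/
import Mathlib


/-- P̃_X(-(d1-1)/d2) > 0, hence any root k* of P̃_X in (-d1/d2, 0) satisfies
k* < -(d1-1)/d2. -/
theorem stmt_1 (d1 d2 : ℕ) (h1 : 2 ≤ d1) (h2 : d1 ≤ d2) :
    (0 < (d2 : ℝ) * (d1*d2 - 2*d1 - d2 + 1) * (-((d1 : ℝ) - 1)/d2)^2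
        + 2*(d2 - 1)*(d1 - 1)*d1 * (-((d1 : ℝ) - 1)/d2) + d1^2*(d1 - 1)) ∧
    (∀ kstar : ℝ, -(d1 : ℝ)/d2 < kstar → kstar < 0 →
      (d2 : ℝ) * (d1*d2 - 2*d1 - d2 + 1) * kstar^2
        + 2*(d2 - 1)*(d1 - 1)*d1 * kstar + d1^2*(d1 - 1) = 0 →
      kstar < -((d1 : ℝ) - 1)/d2) := by
  have hd1 : (2 : ℝ) ≤ (d1 : ℝ) := by exact_mod_cast h1
  have hd2 : (d1 : ℝ) ≤ (d2 : ℝ) := by exact_mod_cast h2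
  have hd2pos : (0 : ℝ) < d2 := by linarith
  constructor
  · have key : (d2 : ℝ) * ((d2 : ℝ) * (d1*d2 - 2*d1 - d2 + 1) * (-((d1 : ℝ) - 1)/d2)^2
        + 2*(d2 - 1)*(d1 - 1)*d1 * (-((d1 : ℝ) - 1)/d2) + d1^2*(d1 - 1))
        = ((d1:ℝ)-1)*((d1:ℝ)+(d2:ℝ)-1) := by
      field_simp
      ring
    have hpos : (0:ℝ) < ((d1:ℝ)-1)*((d1:ℝ)+(d2:ℝ)-1) := by nlinarith
    nlinarith [mul_pos hd2pos hpos]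
  · intro k hk1 hk2 heq
    by_contra hcon
    push_neg at hcon
    have hu1 : -(d1 : ℝ) < d2 * k := by
      have h := (div_lt_iff₀ hd2pos).mp hk1
      linarith [h]
    have hu2 : -((d1:ℝ)-1) ≤ d2 * k := by
      have h := (div_le_iff₀ hd2pos).mp hcon
      linarith [h]
    have hu0 : (d2:ℝ) * k < 0 := mul_neg_of_pos_of_neg hd2pos hk2
    have hident : (d2:ℝ) * ((d2 : ℝ) * (d1*d2 - 2*d1 - d2 + 1) * k^2
        + 2*(d2 - 1)*(d1 - 1)*d1 * k + d1^2*(d1 - 1))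
        = -(d1:ℝ)*((d2:ℝ)*k+(d1:ℝ)-1)*((d2:ℝ)*k)
          - ((d1:ℝ)+(d2:ℝ)-1)*((d2:ℝ)*k+(d1:ℝ))*((d2:ℝ)*k)
          + (d1:ℝ)*(d2:ℝ)*((d2:ℝ)*k+(d1:ℝ))*((d2:ℝ)*k+(d1:ℝ)-1) := by ring
    have hp : (0:ℝ) ≤ (d2:ℝ)*k + (d1:ℝ) - 1 := by linarith
    have hq : (0:ℝ) < (d2:ℝ)*k + (d1:ℝ) := by linarith
    have hnu : (0:ℝ) < -((d2:ℝ)*k) := by linarith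
    have hd1npos : (0:ℝ) < (d1:ℝ) := by linarith
    have hs : (0:ℝ) < (d1:ℝ) + (d2:ℝ) - 1 := by linarith
    rw [heq, mul_zero] at hident
    nlinarith [mul_nonneg (mul_nonneg hd1npos.le hp) hnu.le,
      mul_pos (mul_pos hs hq) hnu,
      mul_nonneg (mul_nonneg (mul_nonneg hd1npos.le hd2pos.le) hq.le) hp]
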